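/- Let G=(V,E) be a finite simple graph with |V| = n ≥ 1 and let 0 < q ≤ 1. Sample each edge of E independently with probability q. Then with probability at least 1 − e^{−n}, for every vertex subset S ⊆ V whose induced edge set E(S) = {(i,j) ∈ E : i,j ∈ S} has |E(S)| ≥ 2n/q, at least one edge of E(S) is sampled. -/

import Mathlib

open Finset MeasureTheory
open scoped Classical

/-- Lemma 3.1 of Lattanzi et al.: sampling each edge independently
with probability `q`, with probability at least `1 − e^{−n}` every vertex subset
whose induced subgraph has at least `2n/q` edges has a sampled edge. -/
theorem sampling_hits_dense_induced_subgraphs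
    {V : Type*} [Fintype V] [DecidableEq V]
    (G : SimpleGraph V) [DecidableRel G.Adj]
    (hn : 1 ≤ Fintype.card V)
    (q : ℝ) (hq0 : 0 < q) (hq1 : q ≤ 1) :
    (Measure.pi (fun _ : {e : Sym2 V // e ∈ G.edgeFinset} =>
        (PMF.bernoulli (Real.toNNReal q) (Real.toNNReal_le_one.mpr hq1)).toMeasure))
      {ω | ∀ S : Finset V,
        2 * (Fintype.card V : ℝ) / q ≤
            ((G.edgeFinset.filter (fun e => ∀ v ∈ e, v ∈ S)).card : ℝ) →
        ∃ e : {e : Sym2 V // e ∈ G.edgeFinset}, (∀ v ∈ e.1, v ∈ S) ∧ ω e = true}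
      ≥ ENNReal.ofReal (1 - Real.exp (-(Fintype.card V : ℝ))) := by
  classical
  set n := Fintype.card V with hnV
  set ι := {e : Sym2 V // e ∈ G.edgeFinset} with hι
  set ν := (PMF.bernoulli (Real.toNNReal q) (Real.toNNReal_le_one.mpr hq1)).toMeasure with hν
  set μ := Measure.pi (fun _ : ι => ν) with hμ
  have hq1' : (0:ℝ) ≤ 1 - q := by linarith
  -- measure of {false} under one bernoulli factor
  have hνf : ν {false} = ENNReal.ofReal (1 - q) := by
    rw [hν, PMF.toMeasure_apply_singleton _ _ (measurableSet_singleton _),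
      PMF.bernoulli_apply]
    simp [ENNReal.ofReal_sub, hq0.le]
    rfl
  -- the dense predicate and induced-edge predicate
  set dense : Finset V → Prop := fun S =>
    2 * (n : ℝ) / q ≤ ((G.edgeFinset.filter (fun e => ∀ v ∈ e, v ∈ S)).card : ℝ) with hdense
  set cyl : Finset V → Set (ι → Bool) := fun S =>
    {ω : ι → Bool | ∀ e : ι, (∀ v ∈ e.1, v ∈ S) → ω e = false} with hcyl
  -- measure of a cylinder
  have cylmeas : ∀ S : Finset V,
      μ (cyl S) = ENNReal.ofReal (1 - q) ^
        (G.edgeFinset.filter (fun e => ∀ v ∈ e, v ∈ S)).card := by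
    intro S
    have hset : cyl S = Set.univ.pi
        (fun e : ι => if (∀ v ∈ e.1, v ∈ S) then ({false} : Set Bool) else Set.univ) := by
      ext ω
      simp only [hcyl, Set.mem_pi, Set.mem_univ, Set.mem_setOf_eq, true_implies]
      constructor
      · intro h e
        split_ifs with he
        · simpa using h e he
        · trivial
      · intro h e he
        have := h e
        rw [if_pos he] at this
        simpa using this
    rw [hset, hμ, Measure.pi_pi]
    have hfac : ∀ e : ι,
        ν (if (∀ v ∈ e.1, v ∈ S) then ({false} : Set Bool) else Set.univ)
          = if (∀ v ∈ e.1, v ∈ S) then ENNReal.ofReal (1 - q) else 1 := by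
      intro e
      split_ifs
      · exact hνf
      · exact measure_univ
    simp_rw [hfac]
    rw [Finset.prod_ite, Finset.prod_const, Finset.prod_const_one, mul_one]
    congr 1
    rw [Finset.univ_eq_attach]
    rw [Finset.filter_attach (fun e : Sym2 V => ∀ v ∈ e, v ∈ S) G.edgeFinset,
      Finset.card_map, Finset.card_attach]
  -- cylinder measure bound for dense S
  have cylbound : ∀ S : Finset V, dense S →
      μ (cyl S) ≤ ENNReal.ofReal (Real.exp (-(2 * (n:ℝ)))) := by
    intro S hS
    rw [cylmeas S]
    set m := (G.edgeFinset.filter (fun e => ∀ v ∈ e, v ∈ S)).card with hm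
    have hqm : 2 * (n:ℝ) ≤ q * m := by
      have := (div_le_iff₀ hq0).mp hS
      linarith
    have hreal : (1 - q) ^ m ≤ Real.exp (-(2 * (n:ℝ))) := by
      calc (1 - q) ^ m ≤ Real.exp (-q) ^ m := by
            apply pow_le_pow_left₀ hq1'
            have := Real.add_one_le_exp (-q)
            linarith
        _ = Real.exp (-(q * m)) := by
            rw [← Real.exp_nat_mul]
            ring_nf
        _ ≤ Real.exp (-(2 * (n:ℝ))) := by
            apply Real.exp_le_exp.mpr
            linarith
    calc ENNReal.ofReal (1 - q) ^ m = ENNReal.ofReal ((1 - q) ^ m) :=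
          (ENNReal.ofReal_pow hq1' m).symm
      _ ≤ ENNReal.ofReal (Real.exp (-(2 * (n:ℝ)))) := ENNReal.ofReal_le_ofReal hreal
  -- the bad event
  set bad : Set (ι → Bool) := {ω | ∃ S : Finset V, dense S ∧ ω ∈ cyl S} with hbaddef
  have hbadsub : bad ⊆ ⋃ S : Finset V, ⋃ _ : dense S, cyl S := by
    intro ω hω
    obtain ⟨S, hS, hωS⟩ := hω
    exact Set.mem_iUnion.mpr ⟨S, Set.mem_iUnion.mpr ⟨hS, hωS⟩⟩
  have hbad : μ bad ≤ ENNReal.ofReal (Real.exp (-(n:ℝ))) := by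
    have h1 : μ bad ≤ ∑' S : Finset V, μ (⋃ _ : dense S, cyl S) :=
      (measure_mono hbadsub).trans (measure_iUnion_le _)
    have h2 : ∀ S : Finset V,
        μ (⋃ _ : dense S, cyl S) ≤ ENNReal.ofReal (Real.exp (-(2 * (n:ℝ)))) := by
      intro S
      by_cases hS : dense S
      · exact (measure_mono (Set.iUnion_subset fun _ => subset_rfl)).trans (cylbound S hS)
      · simp [hS]
    have h3 : μ bad ≤ ∑' _ : Finset V, ENNReal.ofReal (Real.exp (-(2 * (n:ℝ)))) :=
      h1.trans (ENNReal.tsum_le_tsum h2)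
    rw [tsum_fintype, Finset.sum_const, Finset.card_univ, Fintype.card_finset] at h3
    refine h3.trans ?_
    rw [nsmul_eq_mul]
    push_cast
    have h2e : (2:ENNReal) ^ Fintype.card V = ENNReal.ofReal ((2:ℝ) ^ Fintype.card V) := by
      rw [ENNReal.ofReal_pow (by norm_num)]
      norm_num
    rw [h2e, ← ENNReal.ofReal_mul (by positivity)]
    apply ENNReal.ofReal_le_ofReal
    have h2exp : (2:ℝ) ^ Fintype.card V ≤ Real.exp n := by
      calc (2:ℝ) ^ Fintype.card V ≤ Real.exp 1 ^ Fintype.card V := by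
            apply pow_le_pow_left₀ (by norm_num)
            have := Real.add_one_le_exp 1
            linarith
        _ = Real.exp n := by rw [← Real.exp_nat_mul]; ring_nf; rfl
    calc (2:ℝ) ^ Fintype.card V * Real.exp (-(2 * (n:ℝ)))
        ≤ Real.exp n * Real.exp (-(2 * (n:ℝ))) := by
          apply mul_le_mul_of_nonneg_right h2exp (Real.exp_pos _).le
      _ = Real.exp (-(n:ℝ)) := by rw [← Real.exp_add]; ring_nf
  -- the goal set is the complement of bad
  have hcompl : {ω : ι → Bool | ∀ S : Finset V, dense S →
      ∃ e : ι, (∀ v ∈ e.1, v ∈ S) ∧ ω e = true} = badᶜ := by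
    ext ω
    simp only [Set.mem_compl_iff, Set.mem_setOf_eq, hbaddef, not_exists]
    constructor
    · intro h S hSc
      obtain ⟨hS, hall⟩ := hSc
      obtain ⟨e, he, ht⟩ := h S hS
      rw [hall e he] at ht
      exact Bool.false_ne_true ht
    · intro h S hS
      by_contra hc
      push_neg at hc
      exact h S ⟨hS, fun e he => by
        have := hc e he
        simpa using this⟩
  have hmeas : MeasurableSet bad := (Set.toFinite bad).measurableSet
  have hprob : IsProbabilityMeasure μ := by
    rw [hμ]
    infer_instance
  rw [ge_iff_le]
  show ENNReal.ofReal (1 - Real.exp (-(n:ℝ))) ≤ μ {ω : ι → Bool | ∀ S : Finset V, dense S →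
      ∃ e : ι, (∀ v ∈ e.1, v ∈ S) ∧ ω e = true}
  rw [hcompl, prob_compl_eq_one_sub hmeas]
  have hexple : Real.exp (-(n:ℝ)) ≤ 1 :=
    Real.exp_le_one_iff.mpr (neg_nonpos.mpr (Nat.cast_nonneg n))
  have hofreal : ENNReal.ofReal (Real.exp (-(n:ℝ))) ≤ 1 := ENNReal.ofReal_le_one.mpr hexple
  calc ENNReal.ofReal (1 - Real.exp (-(n:ℝ)))
      ≤ 1 - ENNReal.ofReal (Real.exp (-(n:ℝ))) := by
        apply ENNReal.le_sub_of_add_le_right ENNReal.ofReal_ne_top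
        rw [← ENNReal.ofReal_add (by linarith) (Real.exp_pos _).le, sub_add_cancel,
          ENNReal.ofReal_one]
    _ ≤ 1 - μ bad := tsub_le_tsub_left hbad 1
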